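/- Let ℓ : [0,τ] → ℝ satisfy ℓ(ε) > 0 for ε > 0 and ℓ(ε) → 0 as ε ↓ 0. Let L : [0,τ] × E × E → ℝ be a Lagrangian such that for every ε ≥ 0 and v ∈ E, L(ε, u_ε, v) = j(ε) (independent of v, since u_ε solves the state equation), and such that ∂_u L(0, u_0, p_0) = 0 (p_0 is the adjoint state). Assume L(ε, ·, p_0) is C^1 along the segment from u_0 to u_ε. If the three limits R_1(u_0,p_0) = lim_{ε↓0} (1/ℓ(ε)) ∫_0^1 [∂_u L(ε, s u_ε + (1−s) u_0, p_0) − ∂_u L(ε, u_0, p_0)](u_ε − u_0) ds, R_2(u_0,p_0) = lim_{ε↓0} (1/ℓ(ε)) [∂_u L(ε, u_0, p_0) − ∂_u L(0, u_0, p_0)](u_ε − u_0), and ∂_ℓ L(0,u_0,p_0) = lim_{ε↓0} (1/ℓ(ε)) [L(ε, u_0, p_0) − L(0, u_0, p_0)] all exist, then j(ε) = j(0) + ℓ(ε)·(R_1(u_0,p_0) + R_2(u_0,p_0) + ∂_ℓ L(0,u_0,p_0)) + o(ℓ(ε)) as ε ↓ 0. -/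

import Mathlib

open Filter intervalIntegral

/-- Delfour's Lagrangian theorem for first topological derivatives: under existence of the
three limits `R₁`, `R₂`, `∂_ℓ L(0,u₀,p₀)`, the reduced cost `j(ε) = L(ε, u_ε, v)` admits
the expansion `j(ε) = j(0) + ℓ(ε)(R₁ + R₂ + ∂_ℓL) + o(ℓ(ε))` as `ε ↓ 0`. -/
theorem delfour_topological_expansion
    {E : Type*} [NormedAddCommGroup E] [NormedSpace ℝ E]
    (τ : ℝ) (hτ : 0 < τ)
    (ℓ : ℝ → ℝ) (hℓpos : ∀ ε, 0 < ε → 0 < ℓ ε)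
    (hℓ0 : Tendsto ℓ (nhdsWithin 0 (Set.Ioi 0)) (nhds 0))
    (L : ℝ → E → E → ℝ) (L' : ℝ → E → E → (E →L[ℝ] ℝ))
    (u : ℝ → E) (p₀ : E) (j : ℝ → ℝ)
    -- the reduced cost: L(ε, u_ε, v) = j(ε) independently of v
    (hstate : ∀ ε ∈ Set.Icc (0:ℝ) τ, ∀ v : E, L ε (u ε) v = j ε)
    -- p₀ is the adjoint state: ∂_u L(0, u₀, p₀) = 0
    (hadj : L' 0 (u 0) p₀ = 0)
    -- L(ε, ·, p₀) is C¹ along the segment from u₀ to u_ε, with derivative L'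
    (hderiv : ∀ ε ∈ Set.Icc (0:ℝ) τ, ∀ s ∈ Set.Icc (0:ℝ) 1,
      HasFDerivAt (fun w => L ε w p₀) (L' ε (s • u ε + (1 - s) • u 0) p₀)
        (s • u ε + (1 - s) • u 0))
    (hcont : ∀ ε ∈ Set.Icc (0:ℝ) τ,
      ContinuousOn (fun s : ℝ => L' ε (s • u ε + (1 - s) • u 0) p₀) (Set.Icc 0 1))
    (R₁ R₂ dℓL : ℝ)
    (hR₁ : Tendsto (fun ε => (1 / ℓ ε) *
        ∫ s in (0:ℝ)..1,
          (L' ε (s • u ε + (1 - s) • u 0) p₀ (u ε - u 0) - L' ε (u 0) p₀ (u ε - u 0)))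
      (nhdsWithin 0 (Set.Ioi 0)) (nhds R₁))
    (hR₂ : Tendsto (fun ε => (1 / ℓ ε) *
        (L' ε (u 0) p₀ (u ε - u 0) - L' 0 (u 0) p₀ (u ε - u 0)))
      (nhdsWithin 0 (Set.Ioi 0)) (nhds R₂))
    (hdℓ : Tendsto (fun ε => (1 / ℓ ε) * (L ε (u 0) p₀ - L 0 (u 0) p₀))
      (nhdsWithin 0 (Set.Ioi 0)) (nhds dℓL)) :
    (fun ε => j ε - j 0 - ℓ ε * (R₁ + R₂ + dℓL))
      =o[nhdsWithin 0 (Set.Ioi 0)] ℓ := by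

  set l := nhdsWithin (0:ℝ) (Set.Ioi 0) with hl
  set C := R₁ + R₂ + dℓL with hC
  have hmem : Set.Ioc (0:ℝ) τ ∈ l := by
    have h1 : Set.Ioo (0:ℝ) τ ∈ l := Ioo_mem_nhdsGT_of_mem ⟨le_refl _, hτ⟩
    exact Filter.mem_of_superset h1 Set.Ioo_subset_Ioc_self
  have key : ∀ ε ∈ Set.Ioc (0:ℝ) τ,
      j ε - j 0 =
        (∫ s in (0:ℝ)..1, (L' ε (s • u ε + (1 - s) • u 0) p₀ (u ε - u 0)
            - L' ε (u 0) p₀ (u ε - u 0)))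
        + (L' ε (u 0) p₀ (u ε - u 0) - L' 0 (u 0) p₀ (u ε - u 0))
        + (L ε (u 0) p₀ - L 0 (u 0) p₀) := by
    intro ε hε
    have hεIcc : ε ∈ Set.Icc (0:ℝ) τ := ⟨hε.1.le, hε.2⟩
    have h0Icc : (0:ℝ) ∈ Set.Icc (0:ℝ) τ := ⟨le_refl _, hτ.le⟩
    have hcont' : ContinuousOn
        (fun s : ℝ => L' ε (s • u ε + (1 - s) • u 0) p₀ (u ε - u 0)) (Set.Icc 0 1) :=
      (ContinuousLinearMap.apply ℝ ℝ (u ε - u 0)).continuous.comp_continuousOn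
        (hcont ε hεIcc)
    have hft : ∫ s in (0:ℝ)..1, L' ε (s • u ε + (1 - s) • u 0) p₀ (u ε - u 0)
        = L ε (u ε) p₀ - L ε (u 0) p₀ := by
      have hint : IntervalIntegrable
          (fun s : ℝ => L' ε (s • u ε + (1 - s) • u 0) p₀ (u ε - u 0))
          MeasureTheory.volume 0 1 := by
        apply ContinuousOn.intervalIntegrable
        rwa [Set.uIcc_of_le (by norm_num : (0:ℝ) ≤ 1)]
      have hderivg : ∀ s ∈ Set.uIcc (0:ℝ) 1,
          HasDerivAt (fun s : ℝ => L ε (s • u ε + (1 - s) • u 0) p₀)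
            (L' ε (s • u ε + (1 - s) • u 0) p₀ (u ε - u 0)) s := by
        intro s hs
        rw [Set.uIcc_of_le (by norm_num : (0:ℝ) ≤ 1)] at hs
        have hc : HasDerivAt (fun s : ℝ => s • u ε + (1 - s) • u 0) (u ε - u 0) s := by
          have h1 : HasDerivAt (fun s : ℝ => s • u ε) ((1:ℝ) • u ε) s :=
            (hasDerivAt_id s).smul_const (u ε)
          have h2 : HasDerivAt (fun s : ℝ => (1 - s) • u 0) ((-1:ℝ) • u 0) s := by
            have := ((hasDerivAt_const s (1:ℝ)).sub (hasDerivAt_id s)).smul_const (u 0)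
            simpa using this
          have : HasDerivAt (fun s : ℝ => s • u ε + (1 - s) • u 0)
              ((1:ℝ) • u ε + (-1:ℝ) • u 0) s := h1.add h2
          simpa [sub_eq_add_neg, smul_sub] using this
        exact (hderiv ε hεIcc s hs).comp_hasDerivAt s hc
      have := intervalIntegral.integral_eq_sub_of_hasDerivAt hderivg hint
      rw [this]
      norm_num
    have hconst : IntervalIntegrable
        (fun _ : ℝ => L' ε (u 0) p₀ (u ε - u 0)) MeasureTheory.volume 0 1 :=
      intervalIntegrable_const
    have hint : IntervalIntegrable
        (fun s : ℝ => L' ε (s • u ε + (1 - s) • u 0) p₀ (u ε - u 0))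
        MeasureTheory.volume 0 1 := by
      apply ContinuousOn.intervalIntegrable
      rwa [Set.uIcc_of_le (by norm_num : (0:ℝ) ≤ 1)]
    rw [intervalIntegral.integral_sub hint hconst, hft,
      intervalIntegral.integral_const]
    rw [hadj]
    simp only [ContinuousLinearMap.zero_apply, sub_zero, smul_eq_mul]
    rw [hstate ε hεIcc p₀, hstate 0 h0Icc p₀]
    ring
  have hsum : Tendsto (fun ε => (1 / ℓ ε) * (j ε - j 0)) l (nhds C) := by
    refine Tendsto.congr' ?_ ((hR₁.add hR₂).add hdℓ)
    filter_upwards [hmem] with ε hε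
    rw [key ε hε]; ring
  have hne : ∀ᶠ ε in l, ℓ ε = 0 → j ε - j 0 - ℓ ε * C = 0 := by
    filter_upwards [self_mem_nhdsWithin] with ε hε h0
    exact absurd h0 (ne_of_gt (hℓpos ε hε))
  rw [Asymptotics.isLittleO_iff_tendsto' hne]
  have h2 : Tendsto (fun ε => (1 / ℓ ε) * (j ε - j 0) - C) l (nhds (C - C)) :=
    hsum.sub tendsto_const_nhds
  rw [sub_self] at h2
  refine Tendsto.congr' ?_ h2
  filter_upwards [self_mem_nhdsWithin] with ε hε
  have hℓne : ℓ ε ≠ 0 := ne_of_gt (hℓpos ε hε)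
  field_simp
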